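/- arXiv:1407.5176 — 2 statements merged into one kernel-verified Lean document; each statement's English description precedes it below -/
import Mathlib

section
/- For every β > 0, J > 0, σ ∈ (1/2,1) and h ∈ ℝ, the thermodynamic limit of the Dyson hierarchical model free energy exists: the sequence k ↦ f_k(h,β,J,σ) converges to a finite limit f(h,β,J,σ) as k → ∞. -/
open Real Filter

/-- The ±1 value of a Boolean spin. -/
noncomputable def spin (b : Bool) : ℝ := if b then 1 else -1

/-- Embedding of the first half of the sites. -/
def finLeft {k : ℕ} (i : Fin (2 ^ k)) : Fin (2 ^ (k + 1)) :=
  ⟨i.1, lt_of_lt_of_le i.2 (Nat.pow_le_pow_right (by norm_num) (Nat.le_succ k))⟩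

/-- Embedding of the second half of the sites. -/
def finRight {k : ℕ} (i : Fin (2 ^ k)) : Fin (2 ^ (k + 1)) :=
  ⟨i.1 + 2 ^ k, by
    have h2 : 2 ^ (k + 1) = 2 ^ k + 2 ^ k := by rw [pow_succ]; ring
    have := i.2; omega⟩

/-- The Dyson hierarchical model Hamiltonian, defined recursively. -/
noncomputable def dysonH (J σ : ℝ) : (k : ℕ) → (Fin (2 ^ k) → Bool) → ℝ
  | 0, _ => 0
  | (k + 1), S =>
      dysonH J σ k (fun i => S (finLeft i)) + dysonH J σ k (fun i => S (finRight i)) -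
        J / (2 : ℝ) ^ (2 * σ * ((k : ℝ) + 1)) *
          ∑ i : Fin (2 ^ (k + 1)), ∑ j : Fin (2 ^ (k + 1)),
            if i < j then spin (S i) * spin (S j) else 0

/-- The finite-volume free energy of the Dyson hierarchical model. -/
noncomputable def dysonF (h β J σ : ℝ) (k : ℕ) : ℝ :=
  ((2 : ℝ) ^ k)⁻¹ * Real.log (∑ S : Fin (2 ^ k) → Bool,
    Real.exp (-β * dysonH J σ k S + β * h * ∑ i, spin (S i)))

/- ---------------- Auxiliary material ---------------- -/

/-- Gluing of two half-configurations. -/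
def glue {k : ℕ} (p : (Fin (2 ^ k) → Bool) × (Fin (2 ^ k) → Bool)) :
    Fin (2 ^ (k + 1)) → Bool := fun j =>
  if hj : j.1 < 2 ^ k then p.1 ⟨j.1, hj⟩
  else p.2 ⟨j.1 - 2 ^ k, by
    have h2 : 2 ^ (k + 1) = 2 ^ k + 2 ^ k := by rw [pow_succ]; ring
    have := j.2; omega⟩

lemma glue_left {k : ℕ} (p : (Fin (2 ^ k) → Bool) × (Fin (2 ^ k) → Bool)) (i : Fin (2 ^ k)) :
    glue p (finLeft i) = p.1 i := by
  simp only [glue, finLeft]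
  exact dif_pos i.2

lemma glue_right {k : ℕ} (p : (Fin (2 ^ k) → Bool) × (Fin (2 ^ k) → Bool)) (i : Fin (2 ^ k)) :
    glue p (finRight i) = p.2 i := by
  have hni : ¬ ((finRight i).1 < 2 ^ k) := by simp [finRight]
  unfold glue
  rw [dif_neg hni]
  exact congrArg p.2 (Fin.ext (by simp [finRight]))

/-- The gluing equivalence between pairs of half-configurations and full configurations. -/
def glueEquiv (k : ℕ) :
    ((Fin (2 ^ k) → Bool) × (Fin (2 ^ k) → Bool)) ≃ (Fin (2 ^ (k + 1)) → Bool) where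
  toFun := glue
  invFun S := (fun i => S (finLeft i), fun i => S (finRight i))
  left_inv p := by
    refine Prod.ext ?_ ?_ <;> funext i
    · exact glue_left p i
    · exact glue_right p i
  right_inv S := by
    funext j
    show glue (fun i => S (finLeft i), fun i => S (finRight i)) j = S j
    unfold glue
    by_cases hj : j.1 < 2 ^ k
    · rw [dif_pos hj]
      exact congrArg S (Fin.ext rfl)
    · rw [dif_neg hj]
      refine congrArg S (Fin.ext ?_)
      simp only [finRight]
      omega

/-- The splitting equivalence for sites. -/
def halfEquiv (k : ℕ) : Fin (2 ^ k) ⊕ Fin (2 ^ k) ≃ Fin (2 ^ (k + 1)) where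
  toFun := Sum.elim finLeft finRight
  invFun j :=
    if hj : j.1 < 2 ^ k then Sum.inl ⟨j.1, hj⟩
    else Sum.inr ⟨j.1 - 2 ^ k, by
      have h2 : 2 ^ (k + 1) = 2 ^ k + 2 ^ k := by rw [pow_succ]; ring
      have := j.2; omega⟩
  left_inv x := by
    rcases x with i | i
    · simp [finLeft, i.2]
    · have hni : ¬ (i.1 + 2 ^ k < 2 ^ k) := by omega
      simp [finRight, hni]
  right_inv j := by
    by_cases hj : j.1 < 2 ^ k
    · simp [hj, finLeft]
    · simp only [hj, dif_neg, not_false_iff]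
      apply Fin.ext
      simp only [Sum.elim_inr, finRight]
      omega

lemma sum_split {k : ℕ} (g : Fin (2 ^ (k + 1)) → ℝ) :
    ∑ j, g j = ∑ i, g (finLeft i) + ∑ i, g (finRight i) := by
  rw [← Equiv.sum_comp (halfEquiv k) g, Fintype.sum_sum_type]
  rfl

/-- Bounds on the pair-interaction sum for ±1 variables. -/
lemma pair_sum_bounds (n : ℕ) (s : Fin n → ℝ) (hs : ∀ i, s i = 1 ∨ s i = -1) :
    -((n : ℝ) ^ 2) ≤ (∑ i, ∑ j, if i < j then s i * s j else 0) ∧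
      (∑ i, ∑ j, if i < j then s i * s j else 0) ≤ (n : ℝ) ^ 2 := by
  have hsq : ∀ i, s i * s i = 1 := fun i => by rcases hs i with h | h <;> rw [h] <;> norm_num
  have hle : ∀ i j, s i * s j ≤ 1 := fun i j => by
    rcases hs i with h | h <;> rcases hs j with h' | h' <;> rw [h, h'] <;> norm_num
  set Q := ∑ i, ∑ j, if i < j then s i * s j else 0 with hQdef
  have key : (∑ i, s i) ^ 2 = 2 * Q + n := by
    have e1 : (∑ i, s i) ^ 2 = ∑ i, ∑ j, s i * s j := by
      rw [sq, Finset.sum_mul_sum]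
    have e2 : ∀ i j : Fin n, s i * s j =
        (if i < j then s i * s j else 0) + (if j < i then s i * s j else 0) +
          (if i = j then (1 : ℝ) else 0) := by
      intro i j
      rcases lt_trichotomy i j with hij | hij | hij
      · simp [hij, asymm hij, hij.ne]
      · subst hij; simp [lt_irrefl, hsq i]
      · simp [hij, asymm hij, hij.ne']
    have e3 : (∑ i, ∑ j, if j < i then s i * s j else 0) = Q := by
      rw [Finset.sum_comm, hQdef]
      refine Finset.sum_congr rfl fun i _ => Finset.sum_congr rfl fun j _ => ?_
      split <;> simp [mul_comm]
    have e4 : (∑ _i : Fin n, ∑ j : Fin n, if _i = j then (1 : ℝ) else 0) = n := by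
      simp [Finset.sum_ite_eq]
    calc (∑ i, s i) ^ 2
        = ∑ i, ∑ j, ((if i < j then s i * s j else 0) + (if j < i then s i * s j else 0) +
            (if i = j then (1 : ℝ) else 0)) := by
          rw [e1]; exact Finset.sum_congr rfl fun i _ => Finset.sum_congr rfl fun j _ => e2 i j
      _ = Q + (∑ i, ∑ j, if j < i then s i * s j else 0) +
            (∑ i : Fin n, ∑ j : Fin n, if i = j then (1 : ℝ) else 0) := by
          simp [Finset.sum_add_distrib, hQdef]
      _ = 2 * Q + n := by rw [e3, e4]; ring
  constructor
  · have hn2 : (n : ℝ) ≤ 2 * (n : ℝ) ^ 2 := by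
      rcases Nat.eq_zero_or_pos n with hn | hn
      · subst hn; norm_num
      · have h1 : (1 : ℝ) ≤ (n : ℝ) := by exact_mod_cast hn
        nlinarith
    nlinarith [sq_nonneg (∑ i, s i)]
  · have h1 : Q ≤ ∑ _i : Fin n, ∑ _j : Fin n, (1 : ℝ) := by
      refine Finset.sum_le_sum fun i _ => Finset.sum_le_sum fun j _ => ?_
      split
      · exact hle i j
      · norm_num
    have h2 : (∑ _i : Fin n, ∑ _j : Fin n, (1 : ℝ)) = (n : ℝ) ^ 2 := by simp [sq]
    linarith

/-- The exponent in the Boltzmann weight. -/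
noncomputable def dysonA (h β J σ : ℝ) (k : ℕ) (S : Fin (2 ^ k) → Bool) : ℝ :=
  -β * dysonH J σ k S + β * h * ∑ i, spin (S i)

/-- The partition function. -/
noncomputable def dysonZ (h β J σ : ℝ) (k : ℕ) : ℝ :=
  ∑ S : Fin (2 ^ k) → Bool, Real.exp (dysonA h β J σ k S)

lemma dysonZ_pos (h β J σ : ℝ) (k : ℕ) : 0 < dysonZ h β J σ k :=
  Finset.sum_pos (fun S _ => Real.exp_pos _) Finset.univ_nonempty

lemma dysonF_eq (h β J σ : ℝ) (k : ℕ) :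
    dysonF h β J σ k = ((2 : ℝ) ^ k)⁻¹ * Real.log (dysonZ h β J σ k) := rfl

lemma dysonA_succ (h β J σ : ℝ) (k : ℕ) (S : Fin (2 ^ (k + 1)) → Bool) :
    dysonA h β J σ (k + 1) S =
      dysonA h β J σ k (fun i => S (finLeft i)) + dysonA h β J σ k (fun i => S (finRight i)) +
        β * (J / (2 : ℝ) ^ (2 * σ * ((k : ℝ) + 1))) *
          ∑ i, ∑ j, (if i < j then spin (S i) * spin (S j) else 0) := by
  have hm : (∑ i : Fin (2 ^ (k + 1)), spin (S i)) =
      (∑ i : Fin (2 ^ k), spin (S (finLeft i))) +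
        ∑ i : Fin (2 ^ k), spin (S (finRight i)) := sum_split _
  simp only [dysonA, dysonH, hm]
  ring

lemma sum_exp_add (k : ℕ) (A : (Fin (2 ^ k) → Bool) → ℝ) :
    ∑ S : Fin (2 ^ (k + 1)) → Bool,
        Real.exp (A (fun i => S (finLeft i)) + A (fun i => S (finRight i))) =
      (∑ S : Fin (2 ^ k) → Bool, Real.exp (A S)) ^ 2 := by
  rw [← Equiv.sum_comp (glueEquiv k)
      (fun S => Real.exp (A (fun i => S (finLeft i)) + A (fun i => S (finRight i))))]
  have hterm : ∀ p : (Fin (2 ^ k) → Bool) × (Fin (2 ^ k) → Bool),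
      Real.exp (A (fun i => glueEquiv k p (finLeft i)) + A (fun i => glueEquiv k p (finRight i)))
        = Real.exp (A p.1) * Real.exp (A p.2) := by
    intro p
    have h1 : (fun i => glueEquiv k p (finLeft i)) = p.1 := funext fun i => glue_left p i
    have h2 : (fun i => glueEquiv k p (finRight i)) = p.2 := funext fun i => glue_right p i
    rw [h1, h2, ← Real.exp_add]
  rw [Finset.sum_congr rfl fun p _ => hterm p, sq, Finset.sum_mul_sum]
  exact Fintype.sum_prod_type
    (f := fun p : (Fin (2 ^ k) → Bool) × (Fin (2 ^ k) → Bool) =>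
      Real.exp (A p.1) * Real.exp (A p.2))

lemma log_dysonZ_diff (β J σ h : ℝ) (hβ : 0 < β) (hJ : 0 < J) (k : ℕ) :
    |Real.log (dysonZ h β J σ (k + 1)) - 2 * Real.log (dysonZ h β J σ k)|
      ≤ β * (J / (2 : ℝ) ^ (2 * σ * ((k : ℝ) + 1))) * ((2 : ℝ) ^ (k + 1)) ^ 2 := by
  set c := J / (2 : ℝ) ^ (2 * σ * ((k : ℝ) + 1)) with hc
  have hc0 : 0 < c := div_pos hJ (Real.rpow_pos_of_pos two_pos _)
  set B := β * c * ((2 : ℝ) ^ (k + 1)) ^ 2 with hB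
  have hB0 : 0 ≤ B := by positivity
  have hn : ((2 ^ (k + 1) : ℕ) : ℝ) = (2 : ℝ) ^ (k + 1) := by push_cast; ring
  have hQ : ∀ S : Fin (2 ^ (k + 1)) → Bool,
      |∑ i, ∑ j, (if i < j then spin (S i) * spin (S j) else 0)| ≤ ((2 : ℝ) ^ (k + 1)) ^ 2 := by
    intro S
    have hb := pair_sum_bounds (2 ^ (k + 1)) (fun i => spin (S i))
      (fun i => by by_cases hb : S i <;> simp [spin, hb])
    rw [abs_le]
    exact ⟨by rw [← hn]; exact hb.1, by rw [← hn]; exact hb.2⟩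
  have hrw : dysonZ h β J σ (k + 1) = ∑ S : Fin (2 ^ (k + 1)) → Bool,
      Real.exp (dysonA h β J σ k (fun i => S (finLeft i)) +
          dysonA h β J σ k (fun i => S (finRight i))) *
        Real.exp (β * c * ∑ i, ∑ j, (if i < j then spin (S i) * spin (S j) else 0)) := by
    unfold dysonZ
    refine Finset.sum_congr rfl fun S _ => ?_
    rw [← Real.exp_add, dysonA_succ]
  have hlow : dysonZ h β J σ k ^ 2 * Real.exp (-B) ≤ dysonZ h β J σ (k + 1) := by
    rw [hrw]
    unfold dysonZ
    rw [← sum_exp_add k (dysonA h β J σ k), Finset.sum_mul]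
    refine Finset.sum_le_sum fun S _ => ?_
    refine mul_le_mul_of_nonneg_left (Real.exp_le_exp.2 ?_) (Real.exp_pos _).le
    have h1 := (abs_le.1 (hQ S)).1
    calc -B = β * c * (-(((2 : ℝ) ^ (k + 1)) ^ 2)) := by rw [hB]; ring
      _ ≤ β * c * ∑ i, ∑ j, (if i < j then spin (S i) * spin (S j) else 0) := by
          exact mul_le_mul_of_nonneg_left h1 (by positivity)
  have hhigh : dysonZ h β J σ (k + 1) ≤ dysonZ h β J σ k ^ 2 * Real.exp B := by
    rw [hrw]
    unfold dysonZ
    rw [← sum_exp_add k (dysonA h β J σ k), Finset.sum_mul]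
    refine Finset.sum_le_sum fun S _ => ?_
    refine mul_le_mul_of_nonneg_left (Real.exp_le_exp.2 ?_) (Real.exp_pos _).le
    have h1 := (abs_le.1 (hQ S)).2
    calc β * c * ∑ i, ∑ j, (if i < j then spin (S i) * spin (S j) else 0)
        ≤ β * c * (((2 : ℝ) ^ (k + 1)) ^ 2) := mul_le_mul_of_nonneg_left h1 (by positivity)
      _ = B := by rw [hB]
  have hZk := dysonZ_pos h β J σ k
  have hZk1 := dysonZ_pos h β J σ (k + 1)
  have hlog1 : Real.log (dysonZ h β J σ k ^ 2 * Real.exp (-B)) =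
      2 * Real.log (dysonZ h β J σ k) + (-B) := by
    rw [Real.log_mul (by positivity) (Real.exp_ne_zero _), Real.log_exp, Real.log_pow]
    norm_num
  have hlog2 : Real.log (dysonZ h β J σ k ^ 2 * Real.exp B) =
      2 * Real.log (dysonZ h β J σ k) + B := by
    rw [Real.log_mul (by positivity) (Real.exp_ne_zero _), Real.log_exp, Real.log_pow]
    norm_num
  have h1 := Real.log_le_log (by positivity) hlow
  have h2 := Real.log_le_log hZk1 hhigh
  rw [hlog1] at h1
  rw [hlog2] at h2
  rw [abs_le]
  constructor <;> linarith

lemma dysonF_diff (β J σ h : ℝ) (hβ : 0 < β) (hJ : 0 < J)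
    (hσ : σ ∈ Set.Ioo (1 / 2 : ℝ) 1) (k : ℕ) :
    |dysonF h β J σ (k + 1) - dysonF h β J σ k|
      ≤ (β * J * (2 : ℝ) ^ ((1 : ℝ) - 2 * σ)) * ((2 : ℝ) ^ ((1 : ℝ) - 2 * σ)) ^ k := by
  set r := (2 : ℝ) ^ ((1 : ℝ) - 2 * σ) with hr
  set c := J / (2 : ℝ) ^ (2 * σ * ((k : ℝ) + 1)) with hc
  have hc0 : 0 < c := div_pos hJ (Real.rpow_pos_of_pos two_pos _)
  have hNpos : (0 : ℝ) < (2 : ℝ) ^ (k + 1) := by positivity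
  have hdiff : dysonF h β J σ (k + 1) - dysonF h β J σ k =
      ((2 : ℝ) ^ (k + 1))⁻¹ *
        (Real.log (dysonZ h β J σ (k + 1)) - 2 * Real.log (dysonZ h β J σ k)) := by
    rw [dysonF_eq, dysonF_eq]
    have h2 : ((2 : ℝ) ^ k)⁻¹ = 2 * ((2 : ℝ) ^ (k + 1))⁻¹ := by
      rw [pow_succ]
      field_simp
    rw [h2]
    ring
  have hkey := log_dysonZ_diff β J σ h hβ hJ k
  have hbound : |dysonF h β J σ (k + 1) - dysonF h β J σ k| ≤
      β * c * (2 : ℝ) ^ (k + 1) := by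
    rw [hdiff, abs_mul, abs_of_pos (inv_pos.2 hNpos)]
    calc ((2 : ℝ) ^ (k + 1))⁻¹ *
          |Real.log (dysonZ h β J σ (k + 1)) - 2 * Real.log (dysonZ h β J σ k)|
        ≤ ((2 : ℝ) ^ (k + 1))⁻¹ * (β * c * ((2 : ℝ) ^ (k + 1)) ^ 2) := by
          exact mul_le_mul_of_nonneg_left hkey (by positivity)
      _ = β * c * (2 : ℝ) ^ (k + 1) := by
          field_simp
  refine hbound.trans (le_of_eq ?_)
  have hpow : (2 : ℝ) ^ (k + 1) = (2 : ℝ) ^ (((k : ℝ) + 1)) := by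
    rw [← Real.rpow_natCast (2 : ℝ) (k + 1)]
    norm_num
  have hr2 : c * (2 : ℝ) ^ (k + 1) = J * r ^ (k + 1) := by
    rw [hc, hpow, div_mul_eq_mul_div, mul_div_assoc,
      ← Real.rpow_sub two_pos]
    have harg : (k : ℝ) + 1 - 2 * σ * ((k : ℝ) + 1) = ((1 : ℝ) - 2 * σ) * ((k : ℝ) + 1) := by
      ring
    rw [harg, Real.rpow_mul (by norm_num : (0 : ℝ) ≤ 2)]
    rw [← hr]
    rw [show ((k : ℝ) + 1) = (((k + 1 : ℕ) : ℝ)) by push_cast; ring, Real.rpow_natCast]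
  calc β * c * (2 : ℝ) ^ (k + 1) = β * (c * (2 : ℝ) ^ (k + 1)) := by ring
    _ = β * (J * r ^ (k + 1)) := by rw [hr2]
    _ = (β * J * r) * r ^ k := by rw [pow_succ]; ring

/-- existence of the thermodynamic limit of the DHM free energy. -/
theorem dyson_free_energy_limit_exists (β J σ h : ℝ) (hβ : 0 < β) (hJ : 0 < J)
    (hσ : σ ∈ Set.Ioo (1 / 2 : ℝ) 1) :
    ∃ F : ℝ, Tendsto (fun k => dysonF h β J σ k) atTop (nhds F) := by
  set r := (2 : ℝ) ^ ((1 : ℝ) - 2 * σ) with hr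
  have hr1 : r < 1 := Real.rpow_lt_one_of_one_lt_of_neg one_lt_two (by linarith [hσ.1])
  have hcauchy : CauchySeq (fun k => dysonF h β J σ k) := by
    refine cauchySeq_of_le_geometric r (β * J * r) hr1 fun n => ?_
    rw [Real.dist_eq, abs_sub_comm]
    exact dysonF_diff β J σ h hβ hJ hσ n
  exact cauchySeq_tendsto_of_complete hcauchy
end

section
/- (Non-mean-field bound for the mixture state of the DHM.) For every β > 0, J > 0, σ ∈ (1/2,1), h ∈ ℝ and all real m_1, m_2, the thermodynamic-limit free energy satisfies f(h,β,J,σ) ≥ log 2 + (1/2) log cosh(βh + βJ m_1 (C_{2σ−1} − C_{2σ})) + (1/2) log cosh(βh + βJ m_2 (C_{2σ−1} − C_{2σ})) − (βJ/2)(C_{2σ−1} − C_{2σ})·(m_1² + m_2²)/2. -/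
open Real Filter

/-- The constant `C_y = 2^{-y} / (1 - 2^{-y})`. -/
noncomputable def Cconst (y : ℝ) : ℝ := (2 : ℝ) ^ (-y) / (1 - (2 : ℝ) ^ (-y))

namespace DHM

/-- single-spin weight -/
noncomputable def w (x : ℝ) (b : Bool) : ℝ := Real.exp (x * spin b) / (2 * Real.cosh x)

lemma two_cosh_pos (x : ℝ) : 0 < 2 * Real.cosh x := by positivity

lemma w_pos (x : ℝ) (b : Bool) : 0 < w x b := div_pos (Real.exp_pos _) (two_cosh_pos x)

lemma w_sum (x : ℝ) : w x true + w x false = 1 := by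
  rw [w, w, ← add_div, Real.cosh_eq]
  simp only [spin, if_true, if_false, Bool.false_eq_true, ↓reduceIte, mul_one, mul_neg_one]
  have h : rexp x + rexp (-x) > 0 := by positivity
  field_simp

lemma w_spin (x : ℝ) : w x true * spin true + w x false * spin false = Real.tanh x := by
  rw [w, w, Real.tanh_eq_sinh_div_cosh, Real.sinh_eq, Real.cosh_eq]
  simp [spin]
  field_simp
  ring

lemma log_w (x : ℝ) (b : Bool) : Real.log (w x b) = x * spin b - Real.log (2 * Real.cosh x) := by
  rw [w, Real.log_div (Real.exp_ne_zero _) (ne_of_gt (two_cosh_pos x)), Real.log_exp]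

/-- Gibbs variational inequality -/
lemma gibbs {ι : Type*} [Fintype ι] [Nonempty ι] (p A : ι → ℝ) (hp : ∀ i, 0 < p i)
    (hp1 : ∑ i, p i = 1) :
    ∑ i, p i * (A i - Real.log (p i)) ≤ Real.log (∑ i, Real.exp (A i)) := by
  have h1 : ∀ i : ι, Real.exp (A i) = p i * Real.exp (A i - Real.log (p i)) := by
    intro i
    rw [Real.exp_sub, Real.exp_log (hp i)]
    rw [mul_div_cancel₀ _ (ne_of_gt (hp i))]
  have h2 : Real.exp (∑ i, p i * (A i - Real.log (p i))) ≤ ∑ i, Real.exp (A i) := by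
    calc Real.exp (∑ i, p i * (A i - Real.log (p i)))
        = Real.exp (∑ i, p i • (A i - Real.log (p i))) := by simp [smul_eq_mul]
      _ ≤ ∑ i, p i • Real.exp (A i - Real.log (p i)) :=
          convexOn_exp.map_sum_le (fun i _ => (hp i).le) (by simpa using hp1)
            (fun i _ => Set.mem_univ _)
      _ = ∑ i, Real.exp (A i) := by
          refine Finset.sum_congr rfl fun i _ => ?_
          rw [smul_eq_mul, ← h1]
  have h3 : (0:ℝ) < ∑ i, Real.exp (A i) :=
    Finset.sum_pos (fun i _ => Real.exp_pos _) Finset.univ_nonempty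
  calc ∑ i, p i * (A i - Real.log (p i))
      = Real.log (Real.exp (∑ i, p i * (A i - Real.log (p i)))) := (Real.log_exp _).symm
    _ ≤ Real.log (∑ i, Real.exp (A i)) := Real.log_le_log (Real.exp_pos _) h2

/-- sum over boolean configurations of a product -/
lemma sum_prod_bool {n : ℕ} (f : Fin n → Bool → ℝ) :
    ∑ S : Fin n → Bool, ∏ i, f i (S i) = ∏ i, (f i true + f i false) := by
  rw [show (∏ i, (f i true + f i false)) = ∏ i : Fin n, ∑ b : Bool, f i b by
        refine Finset.prod_congr rfl fun i _ => ?_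
        simp [Fintype.sum_bool, add_comm],
      Fintype.prod_sum]


/-- homogeneous product measure -/
noncomputable def Pm (x : ℝ) {n : ℕ} (S : Fin n → Bool) : ℝ := ∏ i, w x (S i)

lemma Pm_pos (x : ℝ) {n : ℕ} (S : Fin n → Bool) : 0 < Pm x S :=
  Finset.prod_pos fun i _ => w_pos x (S i)

lemma Pm_sum (x : ℝ) (n : ℕ) : ∑ S : Fin n → Bool, Pm x S = 1 := by
  rw [show (∑ S : Fin n → Bool, Pm x S) = ∑ S : Fin n → Bool, ∏ i, w x (S i) from rfl,
    sum_prod_bool]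
  simp [w_sum]

lemma Pm_marg_spin (x : ℝ) {n : ℕ} (i0 : Fin n) :
    ∑ S : Fin n → Bool, Pm x S * spin (S i0) = Real.tanh x := by
  have h1 : ∀ S : Fin n → Bool,
      Pm x S * spin (S i0) = ∏ i, (w x (S i) * (if i = i0 then spin (S i) else 1)) := by
    intro S
    rw [Finset.prod_mul_distrib, Finset.prod_ite_eq' Finset.univ i0 (fun i => spin (S i))]
    simp [Pm]
  rw [Finset.sum_congr rfl fun S _ => h1 S,
    sum_prod_bool (fun i b => w x b * (if i = i0 then spin b else 1))]
  have h2 : ∀ i : Fin n, (w x true * (if i = i0 then spin true else 1) +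
      w x false * (if i = i0 then spin false else 1)) = if i = i0 then Real.tanh x else 1 := by
    intro i
    by_cases hi : i = i0 <;> simp [hi, w_spin, w_sum]
  rw [Finset.prod_congr rfl fun i _ => h2 i, Finset.prod_ite_eq' Finset.univ i0 fun _ => Real.tanh x]
  simp

lemma Pm_marg_pair (x : ℝ) {n : ℕ} {i0 i1 : Fin n} (hij : i0 ≠ i1) :
    ∑ S : Fin n → Bool, Pm x S * (spin (S i0) * spin (S i1)) = Real.tanh x ^ 2 := by
  have h1 : ∀ S : Fin n → Bool,
      Pm x S * (spin (S i0) * spin (S i1)) =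
        ∏ i, (w x (S i) * (if i = i0 then spin (S i) else 1) * (if i = i1 then spin (S i) else 1)) := by
    intro S
    rw [Finset.prod_mul_distrib, Finset.prod_mul_distrib,
      Finset.prod_ite_eq' Finset.univ i0 (fun i => spin (S i)),
      Finset.prod_ite_eq' Finset.univ i1 (fun i => spin (S i))]
    simp [Pm, mul_assoc]
  rw [Finset.sum_congr rfl fun S _ => h1 S,
    sum_prod_bool (fun i b => w x b * (if i = i0 then spin b else 1) * (if i = i1 then spin b else 1))]
  have h2 : ∀ i : Fin n, (w x true * (if i = i0 then spin true else 1) * (if i = i1 then spin true else 1) +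
      w x false * (if i = i0 then spin false else 1) * (if i = i1 then spin false else 1)) =
      (if i = i0 then Real.tanh x else 1) * (if i = i1 then Real.tanh x else 1) := by
    intro i
    rcases eq_or_ne i i0 with hi0 | hi0
    · have hi1 : i ≠ i1 := hi0 ▸ hij
      simp [hi0, hi1, hij, w_spin]
    · rcases eq_or_ne i i1 with hi1 | hi1
      · simp [hi0, hi1, Ne.symm hij, w_spin]
      · simp [hi0, hi1, w_sum]
  rw [Finset.prod_congr rfl fun i _ => h2 i, Finset.prod_mul_distrib,
    Finset.prod_ite_eq' Finset.univ i0 fun _ => Real.tanh x,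
    Finset.prod_ite_eq' Finset.univ i1 fun _ => Real.tanh x]
  simp [sq]

/-- number of ordered pairs i<j -/
lemma count_lt (n : ℕ) :
    ∑ i : Fin n, ∑ j : Fin n, (if i < j then (1:ℝ) else 0) = ((n:ℝ)^2 - n) / 2 := by
  have key : ∀ i j : Fin n, (if i < j then (1:ℝ) else 0) + (if j < i then (1:ℝ) else 0)
      = 1 - (if i = j then (1:ℝ) else 0) := by
    intro i j
    rcases lt_trichotomy i j with h | h | h
    · simp [h, h.ne, not_lt.2 h.le]
    · simp [h]
    · simp [h, (h.ne).symm, not_lt.2 h.le, h.ne']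
  have h1 : (∑ i : Fin n, ∑ j : Fin n, (if i < j then (1:ℝ) else 0)) +
      (∑ i : Fin n, ∑ j : Fin n, (if i < j then (1:ℝ) else 0)) =
      ∑ i : Fin n, ∑ j : Fin n, (1 - (if i = j then (1:ℝ) else 0)) := by
    nth_rewrite 2 [Finset.sum_comm]
    rw [← Finset.sum_add_distrib]
    refine Finset.sum_congr rfl fun i _ => ?_
    rw [← Finset.sum_add_distrib]
    exact Finset.sum_congr rfl fun j _ => key i j
  have h2 : ∑ i : Fin n, ∑ j : Fin n, (1 - (if i = j then (1:ℝ) else 0)) = (n:ℝ)^2 - n := by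
    simp [Finset.sum_sub_distrib, Finset.sum_ite_eq]
    ring
  rw [h2] at h1
  linarith


def sumE (k : ℕ) : (Fin (2 ^ k) ⊕ Fin (2 ^ k)) ≃ Fin (2 ^ (k + 1)) where
  toFun := Sum.elim finLeft finRight
  invFun := fun j => if h : j.1 < 2 ^ k then Sum.inl ⟨j.1, h⟩ else
    Sum.inr ⟨j.1 - 2 ^ k, by have := j.2; have h2 : 2^(k+1) = 2^k + 2^k := by rw [pow_succ]; ring
                             omega⟩
  left_inv := by
    rintro (i | i)
    · simp [finLeft, i.2]
    · have : ¬ (i.1 + 2^k < 2^k) := by omega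
      simp [finRight, this]
  right_inv := by
    intro j
    by_cases h : j.1 < 2 ^ k
    · simp [h, finLeft]
    · simp only [h, dif_neg, not_false_iff, Sum.elim_inr]
      apply Fin.ext
      simp [finRight]
      omega

def glue {k : ℕ} (S1 S2 : Fin (2 ^ k) → Bool) : Fin (2 ^ (k + 1)) → Bool :=
  fun j => Sum.elim S1 S2 ((sumE k).symm j)

lemma glue_left {k : ℕ} (S1 S2 : Fin (2 ^ k) → Bool) (i : Fin (2 ^ k)) :
    glue S1 S2 (finLeft i) = S1 i := by
  have : finLeft i = sumE k (Sum.inl i) := rfl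
  rw [glue, this, Equiv.symm_apply_apply]
  rfl

lemma glue_right {k : ℕ} (S1 S2 : Fin (2 ^ k) → Bool) (i : Fin (2 ^ k)) :
    glue S1 S2 (finRight i) = S2 i := by
  have : finRight i = sumE k (Sum.inr i) := rfl
  rw [glue, this, Equiv.symm_apply_apply]
  rfl

lemma glue_comp_left {k : ℕ} (S1 S2 : Fin (2 ^ k) → Bool) :
    (fun i => glue S1 S2 (finLeft i)) = S1 := funext (glue_left S1 S2)

lemma glue_comp_right {k : ℕ} (S1 S2 : Fin (2 ^ k) → Bool) :
    (fun i => glue S1 S2 (finRight i)) = S2 := funext (glue_right S1 S2)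

def confEquiv (k : ℕ) : ((Fin (2 ^ k) → Bool) × (Fin (2 ^ k) → Bool)) ≃ (Fin (2 ^ (k + 1)) → Bool) where
  toFun := fun p => glue p.1 p.2
  invFun := fun S => (fun i => S (finLeft i), fun i => S (finRight i))
  left_inv := by
    rintro ⟨S1, S2⟩
    simp [glue_comp_left, glue_comp_right]
  right_inv := by
    intro S
    funext j
    show Sum.elim _ _ ((sumE k).symm j) = S j
    rcases h : (sumE k).symm j with i | i
    · have : j = sumE k (Sum.inl i) := by rw [← h, Equiv.apply_symm_apply]
      rw [this]; rfl
    · have : j = sumE k (Sum.inr i) := by rw [← h, Equiv.apply_symm_apply]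
      rw [this]; rfl

lemma sum_glue {k : ℕ} (F : (Fin (2 ^ (k + 1)) → Bool) → ℝ) :
    ∑ S : Fin (2 ^ (k + 1)) → Bool, F S =
      ∑ S1 : Fin (2 ^ k) → Bool, ∑ S2 : Fin (2 ^ k) → Bool, F (glue S1 S2) := by
  rw [← Equiv.sum_comp (confEquiv k) F, Fintype.sum_prod_type]
  rfl

lemma prod_glue {k : ℕ} (g : Fin (2 ^ (k + 1)) → ℝ) :
    ∏ j : Fin (2 ^ (k + 1)), g j =
      (∏ i : Fin (2 ^ k), g (finLeft i)) * ∏ i : Fin (2 ^ k), g (finRight i) := by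
  rw [← Equiv.prod_comp (sumE k) g, Fintype.prod_sum_type]
  rfl

lemma sum_spin_glue {k : ℕ} (g : Fin (2 ^ (k + 1)) → ℝ) :
    ∑ j : Fin (2 ^ (k + 1)), g j =
      (∑ i : Fin (2 ^ k), g (finLeft i)) + ∑ i : Fin (2 ^ k), g (finRight i) := by
  rw [← Equiv.sum_comp (sumE k) g, Fintype.sum_sum_type]
  rfl



/-- partial sums of the hierarchical coupling constants -/
noncomputable def Ck (σ : ℝ) (k : ℕ) : ℝ :=
  ∑ l ∈ Finset.range k, ((2:ℝ) ^ (2 * σ * ((l:ℝ) + 1)))⁻¹ * ((2:ℝ) ^ (l + 1) - 1)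

lemma Ck_succ (σ : ℝ) (k : ℕ) :
    Ck σ (k + 1) = Ck σ k + ((2:ℝ) ^ (2 * σ * ((k:ℝ) + 1)))⁻¹ * ((2:ℝ) ^ (k + 1) - 1) :=
  Finset.sum_range_succ _ k

lemma Pm_glue (x : ℝ) {k : ℕ} (S1 S2 : Fin (2 ^ k) → Bool) :
    Pm x (glue S1 S2) = Pm x S1 * Pm x S2 := by
  show (∏ j, w x (glue S1 S2 j)) = _
  rw [prod_glue (fun j => w x (glue S1 S2 j))]
  simp only [glue_left, glue_right]
  rfl

lemma sum_factor_left {k : ℕ} (P1 P2 G : (Fin (2 ^ k) → Bool) → ℝ)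
    (h2 : ∑ S2 : Fin (2 ^ k) → Bool, P2 S2 = 1) :
    ∑ S1 : Fin (2 ^ k) → Bool, ∑ S2 : Fin (2 ^ k) → Bool, (P1 S1 * P2 S2) * G S1 =
      ∑ S1 : Fin (2 ^ k) → Bool, P1 S1 * G S1 := by
  refine Finset.sum_congr rfl fun S1 _ => ?_
  calc ∑ S2 : Fin (2 ^ k) → Bool, (P1 S1 * P2 S2) * G S1
      = (P1 S1 * G S1) * ∑ S2 : Fin (2 ^ k) → Bool, P2 S2 := by
        rw [Finset.mul_sum]
        exact Finset.sum_congr rfl fun S2 _ => by ring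
    _ = P1 S1 * G S1 := by rw [h2, mul_one]

lemma sum_factor_right {k : ℕ} (P1 P2 G : (Fin (2 ^ k) → Bool) → ℝ)
    (h1 : ∑ S1 : Fin (2 ^ k) → Bool, P1 S1 = 1) :
    ∑ S1 : Fin (2 ^ k) → Bool, ∑ S2 : Fin (2 ^ k) → Bool, (P1 S1 * P2 S2) * G S2 =
      ∑ S2 : Fin (2 ^ k) → Bool, P2 S2 * G S2 := by
  rw [Finset.sum_comm]
  refine Finset.sum_congr rfl fun S2 _ => ?_
  calc ∑ S1 : Fin (2 ^ k) → Bool, (P1 S1 * P2 S2) * G S2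
      = (P2 S2 * G S2) * ∑ S1 : Fin (2 ^ k) → Bool, P1 S1 := by
        rw [Finset.mul_sum]
        exact Finset.sum_congr rfl fun S1 _ => by ring
    _ = P2 S2 * G S2 := by rw [h1, mul_one]

/-- expectation of the top-level pair sum under a homogeneous product measure -/
lemma pairsum_exp (x : ℝ) (n : ℕ) :
    ∑ S : Fin n → Bool, Pm x S *
        (∑ i : Fin n, ∑ j : Fin n, if i < j then spin (S i) * spin (S j) else 0) =
      Real.tanh x ^ 2 * (((n:ℝ)^2 - n) / 2) := by
  have swap : ∑ S : Fin n → Bool, Pm x S *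
      (∑ i : Fin n, ∑ j : Fin n, if i < j then spin (S i) * spin (S j) else 0) =
      ∑ i : Fin n, ∑ j : Fin n, ∑ S : Fin n → Bool,
        Pm x S * (if i < j then spin (S i) * spin (S j) else 0) := by
    simp_rw [Finset.mul_sum]
    rw [Finset.sum_comm]
    exact Finset.sum_congr rfl fun i _ => Finset.sum_comm
  have inner : ∀ i j : Fin n, (∑ S : Fin n → Bool,
      Pm x S * (if i < j then spin (S i) * spin (S j) else 0)) =
      if i < j then Real.tanh x ^ 2 else 0 := by
    intro i j
    by_cases hij : i < j
    · simp only [if_pos hij]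
      exact Pm_marg_pair x (ne_of_lt hij)
    · simp [if_neg hij]
  rw [swap]
  calc ∑ i : Fin n, ∑ j : Fin n, ∑ S : Fin n → Bool,
        Pm x S * (if i < j then spin (S i) * spin (S j) else 0)
      = ∑ i : Fin n, ∑ j : Fin n, Real.tanh x ^ 2 * (if i < j then (1:ℝ) else 0) := by
        refine Finset.sum_congr rfl fun i _ => Finset.sum_congr rfl fun j _ => ?_
        rw [inner i j]
        by_cases hij : i < j <;> simp [hij]
    _ = Real.tanh x ^ 2 * (((n:ℝ)^2 - n) / 2) := by
        simp_rw [← Finset.mul_sum]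
        rw [count_lt]

/-- expected Hamiltonian under the homogeneous product measure -/
lemma EH (J σ : ℝ) (x : ℝ) : ∀ k : ℕ,
    ∑ S : Fin (2 ^ k) → Bool, Pm x S * dysonH J σ k S =
      Real.tanh x ^ 2 * (-(J / 2) * 2 ^ k * Ck σ k) := by
  intro k
  induction k with
  | zero => simp [dysonH, Ck]
  | succ k ih =>
    have expand : ∑ S : Fin (2 ^ (k+1)) → Bool, Pm x S * dysonH J σ (k+1) S =
        (∑ S : Fin (2 ^ (k+1)) → Bool, Pm x S * dysonH J σ k (fun i => S (finLeft i)))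
        + (∑ S : Fin (2 ^ (k+1)) → Bool, Pm x S * dysonH J σ k (fun i => S (finRight i)))
        - (J / (2 : ℝ) ^ (2 * σ * ((k : ℝ) + 1))) *
            ∑ S : Fin (2 ^ (k+1)) → Bool, Pm x S *
              (∑ i : Fin (2 ^ (k + 1)), ∑ j : Fin (2 ^ (k + 1)),
                if i < j then spin (S i) * spin (S j) else 0) := by
      calc ∑ S : Fin (2 ^ (k+1)) → Bool, Pm x S * dysonH J σ (k+1) S
          = ∑ S : Fin (2 ^ (k+1)) → Bool,
              (Pm x S * dysonH J σ k (fun i => S (finLeft i))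
                + Pm x S * dysonH J σ k (fun i => S (finRight i))
                - (J / (2 : ℝ) ^ (2 * σ * ((k : ℝ) + 1))) * (Pm x S *
                    ∑ i : Fin (2 ^ (k + 1)), ∑ j : Fin (2 ^ (k + 1)),
                      if i < j then spin (S i) * spin (S j) else 0)) := by
            refine Finset.sum_congr rfl fun S _ => ?_
            rw [show dysonH J σ (k+1) S = dysonH J σ k (fun i => S (finLeft i)) +
                  dysonH J σ k (fun i => S (finRight i)) -
                  J / (2 : ℝ) ^ (2 * σ * ((k : ℝ) + 1)) *
                    ∑ i : Fin (2 ^ (k + 1)), ∑ j : Fin (2 ^ (k + 1)),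
                      if i < j then spin (S i) * spin (S j) else 0 from rfl]
            ring
        _ = _ := by
            rw [Finset.sum_sub_distrib, Finset.sum_add_distrib, ← Finset.mul_sum]
    have left : ∑ S : Fin (2 ^ (k+1)) → Bool, Pm x S * dysonH J σ k (fun i => S (finLeft i)) =
        Real.tanh x ^ 2 * (-(J / 2) * 2 ^ k * Ck σ k) := by
      rw [sum_glue (fun S => Pm x S * dysonH J σ k (fun i => S (finLeft i)))]
      simp only [glue_left, Pm_glue]
      rw [show (∑ S1 : Fin (2^k) → Bool, ∑ S2 : Fin (2^k) → Bool,
            Pm x S1 * Pm x S2 * dysonH J σ k (fun i => S1 i)) =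
          ∑ S1 : Fin (2^k) → Bool, ∑ S2 : Fin (2^k) → Bool,
            (Pm x S1 * Pm x S2) * dysonH J σ k S1 from rfl,
        sum_factor_left _ _ _ (Pm_sum x (2^k)), ih]
    have right : ∑ S : Fin (2 ^ (k+1)) → Bool, Pm x S * dysonH J σ k (fun i => S (finRight i)) =
        Real.tanh x ^ 2 * (-(J / 2) * 2 ^ k * Ck σ k) := by
      rw [sum_glue (fun S => Pm x S * dysonH J σ k (fun i => S (finRight i)))]
      simp only [glue_right, Pm_glue]
      rw [show (∑ S1 : Fin (2^k) → Bool, ∑ S2 : Fin (2^k) → Bool,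
            Pm x S1 * Pm x S2 * dysonH J σ k (fun i => S2 i)) =
          ∑ S1 : Fin (2^k) → Bool, ∑ S2 : Fin (2^k) → Bool,
            (Pm x S1 * Pm x S2) * dysonH J σ k S2 from rfl,
        sum_factor_right _ _ _ (Pm_sum x (2^k)), ih]
    rw [expand, left, right, pairsum_exp x (2^(k+1)), Ck_succ]
    have hcast : ((2 ^ (k+1) : ℕ) : ℝ) = (2:ℝ)^(k+1) := by push_cast; ring
    rw [hcast]
    have hR : ((2:ℝ) ^ (2 * σ * ((k : ℝ) + 1))) ≠ 0 :=
      ne_of_gt (Real.rpow_pos_of_pos (by norm_num) _)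
    field_simp
    ring


lemma spin_mul_ge (b b' : Bool) : -1 ≤ spin b * spin b' := by
  cases b <;> cases b' <;> norm_num [spin]

lemma E_spin_sum (x : ℝ) (n : ℕ) :
    ∑ S : Fin n → Bool, Pm x S * (∑ i, spin (S i)) = (n:ℝ) * Real.tanh x := by
  simp_rw [Finset.mul_sum]
  rw [Finset.sum_comm]
  calc ∑ i : Fin n, ∑ S : Fin n → Bool, Pm x S * spin (S i)
      = ∑ i : Fin n, Real.tanh x := Finset.sum_congr rfl fun i _ => Pm_marg_spin x i
    _ = (n:ℝ) * Real.tanh x := by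
        rw [Finset.sum_const, Finset.card_univ, Fintype.card_fin, nsmul_eq_mul]

lemma log_Pm (x : ℝ) {n : ℕ} (S : Fin n → Bool) :
    Real.log (Pm x S) = x * (∑ i, spin (S i)) - (n:ℝ) * Real.log (2 * Real.cosh x) := by
  rw [Pm, Real.log_prod (fun i _ => ne_of_gt (w_pos x (S i)))]
  simp_rw [log_w]
  rw [Finset.sum_sub_distrib, ← Finset.mul_sum, Finset.sum_const, Finset.card_univ,
    Fintype.card_fin, nsmul_eq_mul]

lemma hom_value (β J σ h x : ℝ) (k : ℕ) :
    ∑ S : Fin (2^k) → Bool,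
        Pm x S * ((-β * dysonH J σ k S + β * h * ∑ i, spin (S i)) - Real.log (Pm x S)) =
      β * (J/2) * (2:ℝ)^k * Ck σ k * Real.tanh x ^ 2 + β * h * (2:ℝ)^k * Real.tanh x
        + (2:ℝ)^k * (Real.log (2 * Real.cosh x) - x * Real.tanh x) := by
  have hcast : ((2^k : ℕ) : ℝ) = (2:ℝ)^k := by push_cast; ring
  calc ∑ S : Fin (2^k) → Bool,
        Pm x S * ((-β * dysonH J σ k S + β * h * ∑ i, spin (S i)) - Real.log (Pm x S))
      = ∑ S : Fin (2^k) → Bool,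
          ((-β) * (Pm x S * dysonH J σ k S) + (β * h - x) * (Pm x S * ∑ i, spin (S i))
            + ((2:ℝ)^k * Real.log (2 * Real.cosh x)) * Pm x S) := by
        refine Finset.sum_congr rfl fun S _ => ?_
        rw [log_Pm, hcast]
        ring
    _ = (-β) * (∑ S : Fin (2^k) → Bool, Pm x S * dysonH J σ k S)
        + (β * h - x) * (∑ S : Fin (2^k) → Bool, Pm x S * ∑ i, spin (S i))
        + ((2:ℝ)^k * Real.log (2 * Real.cosh x)) * ∑ S : Fin (2^k) → Bool, Pm x S := by
        rw [Finset.sum_add_distrib, Finset.sum_add_distrib, ← Finset.mul_sum, ← Finset.mul_sum,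
          ← Finset.mul_sum]
    _ = _ := by
        rw [EH, E_spin_sum, Pm_sum, hcast]
        ring

/-- the key finite-volume lower bound -/
lemma key (β J σ h x1 x2 : ℝ) (hβ : 0 < β) (hJ : 0 < J) (k : ℕ) :
    (1/2) * ((β*J/2) * Ck σ k * (Real.tanh x1^2 + Real.tanh x2^2)
      + β*h*(Real.tanh x1 + Real.tanh x2)
      + (Real.log (2*Real.cosh x1) - x1 * Real.tanh x1)
      + (Real.log (2*Real.cosh x2) - x2 * Real.tanh x2))
    - β*J*((2:ℝ)^(2*σ*((k:ℝ)+1)))⁻¹ * 2^(k+1)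
    ≤ dysonF h β J σ (k+1) := by
  set R : ℝ := (2:ℝ)^(2*σ*((k:ℝ)+1)) with hRdef
  have hR : 0 < R := Real.rpow_pos_of_pos (by norm_num) _
  set A : (Fin (2^(k+1)) → Bool) → ℝ :=
    fun S => -β * dysonH J σ (k+1) S + β * h * ∑ i, spin (S i) with hA
  set p : (Fin (2^(k+1)) → Bool) → ℝ :=
    fun S => Pm x1 (fun i => S (finLeft i)) * Pm x2 (fun i => S (finRight i)) with hp_def
  have hp : ∀ S, 0 < p S := fun S => mul_pos (Pm_pos _ _) (Pm_pos _ _)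
  have hp1 : ∑ S, p S = 1 := by
    rw [sum_glue p]
    have : ∀ S1 S2 : Fin (2^k) → Bool, p (glue S1 S2) = Pm x1 S1 * Pm x2 S2 := by
      intro S1 S2
      simp only [hp_def, glue_left, glue_right]
    calc ∑ S1 : Fin (2^k) → Bool, ∑ S2 : Fin (2^k) → Bool, p (glue S1 S2)
        = ∑ S1 : Fin (2^k) → Bool, ∑ S2 : Fin (2^k) → Bool, Pm x1 S1 * Pm x2 S2 :=
          Finset.sum_congr rfl fun S1 _ => Finset.sum_congr rfl fun S2 _ => this S1 S2
      _ = (∑ S1 : Fin (2^k) → Bool, Pm x1 S1) * ∑ S2 : Fin (2^k) → Bool, Pm x2 S2 :=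
          (Finset.sum_mul_sum _ _ _ _).symm
      _ = 1 := by rw [Pm_sum, Pm_sum, mul_one]
  have hgibbs := gibbs p A hp hp1
  -- the pair sum
  set ps : (Fin (2^(k+1)) → Bool) → ℝ :=
    fun S => ∑ i : Fin (2 ^ (k + 1)), ∑ j : Fin (2 ^ (k + 1)),
      if i < j then spin (S i) * spin (S j) else 0 with hps_def
  -- expansion of the Gibbs entropy functional
  have hexp : ∑ S, p S * (A S - Real.log (p S)) =
      (β * (J/2) * (2:ℝ)^k * Ck σ k * Real.tanh x1 ^ 2 + β * h * (2:ℝ)^k * Real.tanh x1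
        + (2:ℝ)^k * (Real.log (2 * Real.cosh x1) - x1 * Real.tanh x1))
      + (β * (J/2) * (2:ℝ)^k * Ck σ k * Real.tanh x2 ^ 2 + β * h * (2:ℝ)^k * Real.tanh x2
        + (2:ℝ)^k * (Real.log (2 * Real.cosh x2) - x2 * Real.tanh x2))
      + β * (J / R) * ∑ S, p S * ps S := by
    rw [sum_glue (fun S => p S * (A S - Real.log (p S))), ← hom_value β J σ h x1 k,
      ← hom_value β J σ h x2 k]
    have point : ∀ S1 S2 : Fin (2^k) → Bool,
        p (glue S1 S2) * (A (glue S1 S2) - Real.log (p (glue S1 S2))) =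
          (Pm x1 S1 * Pm x2 S2) *
            ((-β * dysonH J σ k S1 + β * h * ∑ i, spin (S1 i)) - Real.log (Pm x1 S1))
          + (Pm x1 S1 * Pm x2 S2) *
            ((-β * dysonH J σ k S2 + β * h * ∑ i, spin (S2 i)) - Real.log (Pm x2 S2))
          + β * (J / R) * (p (glue S1 S2) * ps (glue S1 S2)) := by
      intro S1 S2
      have e1 : p (glue S1 S2) = Pm x1 S1 * Pm x2 S2 := by
        simp only [hp_def, glue_left, glue_right]
      have e2 : A (glue S1 S2) =
          -β * (dysonH J σ k S1 + dysonH J σ k S2 - (J / R) * ps (glue S1 S2))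
            + β * h * ((∑ i, spin (S1 i)) + ∑ i, spin (S2 i)) := by
        have eH : dysonH J σ (k+1) (glue S1 S2) =
            dysonH J σ k S1 + dysonH J σ k S2 - (J / R) * ps (glue S1 S2) := by
          rw [show dysonH J σ (k+1) (glue S1 S2) =
                dysonH J σ k (fun i => glue S1 S2 (finLeft i)) +
                dysonH J σ k (fun i => glue S1 S2 (finRight i)) -
                J / (2 : ℝ) ^ (2 * σ * ((k : ℝ) + 1)) * ps (glue S1 S2) from rfl]
          simp only [glue_left, glue_right]
          rfl
        have eS : (∑ i : Fin (2^(k+1)), spin (glue S1 S2 i)) =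
            (∑ i, spin (S1 i)) + ∑ i, spin (S2 i) := by
          rw [sum_spin_glue (fun j => spin (glue S1 S2 j))]
          simp only [glue_left, glue_right]
        simp only [hA]
        rw [eH, eS]
      have e3 : Real.log (p (glue S1 S2)) = Real.log (Pm x1 S1) + Real.log (Pm x2 S2) := by
        rw [e1, Real.log_mul (ne_of_gt (Pm_pos _ _)) (ne_of_gt (Pm_pos _ _))]
      rw [e2, e3, e1]
      ring
    calc ∑ S1 : Fin (2^k) → Bool, ∑ S2 : Fin (2^k) → Bool,
          p (glue S1 S2) * (A (glue S1 S2) - Real.log (p (glue S1 S2)))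
        = ∑ S1 : Fin (2^k) → Bool, ∑ S2 : Fin (2^k) → Bool,
            ((Pm x1 S1 * Pm x2 S2) *
              ((-β * dysonH J σ k S1 + β * h * ∑ i, spin (S1 i)) - Real.log (Pm x1 S1))
            + (Pm x1 S1 * Pm x2 S2) *
              ((-β * dysonH J σ k S2 + β * h * ∑ i, spin (S2 i)) - Real.log (Pm x2 S2))
            + β * (J / R) * (p (glue S1 S2) * ps (glue S1 S2))) :=
          Finset.sum_congr rfl fun S1 _ => Finset.sum_congr rfl fun S2 _ => point S1 S2
      _ = _ := by
          simp_rw [Finset.sum_add_distrib]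
          rw [sum_factor_left _ _ _ (Pm_sum x2 (2^k)), sum_factor_right _ _ _ (Pm_sum x1 (2^k))]
          congr 1
          rw [sum_glue (fun S => p S * ps S)]
          simp_rw [Finset.mul_sum]
  -- lower bound for the pair term
  have hcast : ((2^(k+1) : ℕ) : ℝ) = (2:ℝ)^(k+1) := by push_cast; ring
  have hps_lb : ∀ S, -(((2:ℝ)^(k+1))^2) ≤ ps S := by
    intro S
    have h1 : ∑ i : Fin (2^(k+1)), ∑ j : Fin (2^(k+1)), (-1 : ℝ) ≤ ps S := by
      refine Finset.sum_le_sum fun i _ => Finset.sum_le_sum fun j _ => ?_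
      by_cases hij : i < j
      · simpa [hij] using spin_mul_ge (S i) (S j)
      · simp [hij]
    calc -(((2:ℝ)^(k+1))^2) = ∑ i : Fin (2^(k+1)), ∑ j : Fin (2^(k+1)), (-1 : ℝ) := by
          simp [Finset.sum_const, Finset.card_univ]
          ring
      _ ≤ ps S := h1
  have hpair_lb : -(((2:ℝ)^(k+1))^2) ≤ ∑ S, p S * ps S := by
    calc -(((2:ℝ)^(k+1))^2) = ∑ S, p S * (-(((2:ℝ)^(k+1))^2)) := by
          rw [← Finset.sum_mul, hp1, one_mul]
      _ ≤ ∑ S, p S * ps S :=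
          Finset.sum_le_sum fun S _ => mul_le_mul_of_nonneg_left (hps_lb S) (hp S).le
  have hcoef : 0 ≤ β * (J / R) := by positivity
  have hE_lb : (β * (J/2) * (2:ℝ)^k * Ck σ k * Real.tanh x1 ^ 2 + β * h * (2:ℝ)^k * Real.tanh x1
        + (2:ℝ)^k * (Real.log (2 * Real.cosh x1) - x1 * Real.tanh x1))
      + (β * (J/2) * (2:ℝ)^k * Ck σ k * Real.tanh x2 ^ 2 + β * h * (2:ℝ)^k * Real.tanh x2
        + (2:ℝ)^k * (Real.log (2 * Real.cosh x2) - x2 * Real.tanh x2))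
      - β * (J / R) * ((2:ℝ)^(k+1))^2 ≤ ∑ S, p S * (A S - Real.log (p S)) := by
    rw [hexp]
    have := mul_le_mul_of_nonneg_left hpair_lb hcoef
    linarith
  -- conclude
  rw [dysonF]
  have hpow : (0:ℝ) < (2:ℝ)^(k+1) := by positivity
  have hfinal := le_trans hE_lb hgibbs
  have := mul_le_mul_of_nonneg_left hfinal (inv_nonneg.2 hpow.le)
  calc (1/2) * ((β*J/2) * Ck σ k * (Real.tanh x1^2 + Real.tanh x2^2)
      + β*h*(Real.tanh x1 + Real.tanh x2)
      + (Real.log (2*Real.cosh x1) - x1 * Real.tanh x1)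
      + (Real.log (2*Real.cosh x2) - x2 * Real.tanh x2))
    - β*J*R⁻¹ * 2^(k+1)
      = ((2:ℝ)^(k+1))⁻¹ *
        ((β * (J/2) * (2:ℝ)^k * Ck σ k * Real.tanh x1 ^ 2 + β * h * (2:ℝ)^k * Real.tanh x1
          + (2:ℝ)^k * (Real.log (2 * Real.cosh x1) - x1 * Real.tanh x1))
        + (β * (J/2) * (2:ℝ)^k * Ck σ k * Real.tanh x2 ^ 2 + β * h * (2:ℝ)^k * Real.tanh x2
          + (2:ℝ)^k * (Real.log (2 * Real.cosh x2) - x2 * Real.tanh x2))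
        - β * (J / R) * ((2:ℝ)^(k+1))^2) := by
        field_simp
        ring
    _ ≤ ((2:ℝ)^(k+1))⁻¹ * Real.log (∑ S : Fin (2^(k+1)) → Bool, Real.exp (A S)) := this
    _ = ((2:ℝ)^(k+1))⁻¹ * Real.log (∑ S : Fin (2^(k+1)) → Bool,
          Real.exp (-β * dysonH J σ (k+1) S + β * h * ∑ i, spin (S i))) := rfl


lemma r2_eq (σ : ℝ) (l : ℕ) :
    ((2:ℝ) ^ (2 * σ * ((l:ℝ) + 1)))⁻¹ = ((2:ℝ) ^ (-(2*σ))) ^ (l+1) := by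
  rw [← Real.rpow_natCast ((2:ℝ) ^ (-(2*σ))) (l+1), ← Real.rpow_mul (by norm_num : (0:ℝ) ≤ 2),
    ← Real.rpow_neg (by norm_num : (0:ℝ) ≤ 2)]
  push_cast
  ring_nf

lemma pow_eq (σ : ℝ) (l : ℕ) :
    ((2:ℝ) ^ (2 * σ * ((l:ℝ) + 1)))⁻¹ * 2 ^ (l+1) = ((2:ℝ) ^ (-(2*σ-1))) ^ (l+1) := by
  rw [← Real.rpow_natCast ((2:ℝ) ^ (-(2*σ-1))) (l+1), ← Real.rpow_mul (by norm_num : (0:ℝ) ≤ 2),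
    ← Real.rpow_neg (by norm_num : (0:ℝ) ≤ 2),
    show ((2:ℝ) ^ (l+1) : ℝ) = (2:ℝ) ^ ((l+1 : ℕ) : ℝ) from (Real.rpow_natCast 2 (l+1)).symm,
    ← Real.rpow_add (by norm_num : (0:ℝ) < 2)]
  congr 1
  push_cast
  ring

lemma summand_eq (σ : ℝ) (l : ℕ) :
    ((2:ℝ) ^ (2 * σ * ((l:ℝ) + 1)))⁻¹ * ((2:ℝ) ^ (l + 1) - 1) =
      ((2:ℝ) ^ (-(2*σ-1))) ^ (l+1) - ((2:ℝ) ^ (-(2*σ))) ^ (l+1) := by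
  rw [mul_sub, mul_one, pow_eq, r2_eq]

lemma geo (y : ℝ) (hy : 0 < y) :
    Tendsto (fun k => ∑ l ∈ Finset.range k, ((2:ℝ) ^ (-y)) ^ (l+1)) atTop (nhds (Cconst y)) := by
  set r : ℝ := (2:ℝ) ^ (-y) with hr
  have hr0 : 0 ≤ r := Real.rpow_nonneg (by norm_num) _
  have hr1 : r < 1 := Real.rpow_lt_one_of_one_lt_of_neg (by norm_num) (by linarith)
  have hgeom : HasSum (fun n : ℕ => r ^ n) (1 - r)⁻¹ := hasSum_geometric_of_lt_one hr0 hr1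
  have h2 : HasSum (fun n : ℕ => r ^ (n+1)) (r * (1 - r)⁻¹) := by
    have := hgeom.mul_left r
    simpa [pow_succ, mul_comm] using this
  have := h2.tendsto_sum_nat
  rwa [show r * (1 - r)⁻¹ = Cconst y by rw [Cconst, div_eq_mul_inv]] at this

lemma Ck_tendsto (σ : ℝ) (hσ : σ ∈ Set.Ioo (1/2 : ℝ) 1) :
    Tendsto (fun k => Ck σ k) atTop (nhds (Cconst (2*σ-1) - Cconst (2*σ))) := by
  have heq : ∀ k, Ck σ k = (∑ l ∈ Finset.range k, ((2:ℝ) ^ (-(2*σ-1))) ^ (l+1))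
      - ∑ l ∈ Finset.range k, ((2:ℝ) ^ (-(2*σ))) ^ (l+1) := by
    intro k
    rw [Ck, ← Finset.sum_sub_distrib]
    exact Finset.sum_congr rfl fun l _ => summand_eq σ l
  have h1 := geo (2*σ-1) (by rcases hσ with ⟨h, _⟩; linarith)
  have h2 := geo (2*σ) (by rcases hσ with ⟨h, _⟩; linarith)
  simp_rw [heq]
  exact h1.sub h2

lemma err_tendsto (β J σ : ℝ) (hσ : σ ∈ Set.Ioo (1/2 : ℝ) 1) :
    Tendsto (fun k : ℕ => β*J*((2:ℝ)^(2*σ*((k:ℝ)+1)))⁻¹ * 2^(k+1)) atTop (nhds 0) := by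
  have heq : ∀ k : ℕ, β*J*((2:ℝ)^(2*σ*((k:ℝ)+1)))⁻¹ * 2^(k+1) =
      β*J*(((2:ℝ) ^ (-(2*σ-1))) ^ (k+1)) := by
    intro k
    rw [mul_assoc, pow_eq]
  simp_rw [heq]
  set r : ℝ := (2:ℝ) ^ (-(2*σ-1)) with hr
  have hr0 : 0 ≤ r := Real.rpow_nonneg (by norm_num) _
  have hr1 : r < 1 := Real.rpow_lt_one_of_one_lt_of_neg (by norm_num)
    (by rcases hσ with ⟨h, _⟩; linarith)
  have h0 : Tendsto (fun k : ℕ => r ^ k) atTop (nhds 0) :=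
    tendsto_pow_atTop_nhds_zero_of_lt_one hr0 hr1
  have h1 : Tendsto (fun k : ℕ => r ^ (k+1)) atTop (nhds 0) :=
    h0.comp (tendsto_add_atTop_nat 1)
  simpa using h1.const_mul (β*J)

lemma Ck_nonneg (σ : ℝ) (k : ℕ) : 0 ≤ Ck σ k := by
  refine Finset.sum_nonneg fun l _ => mul_nonneg (inv_nonneg.2 (Real.rpow_nonneg (by norm_num) _)) ?_
  have : (1:ℝ) ≤ 2 ^ (l+1) := one_le_pow₀ (by norm_num)
  linarith


end DHM

/-- non-mean-field bound for the mixture state of the DHM. -/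
theorem dyson_nmf_mixture_bound (β J σ h m1 m2 : ℝ) (hβ : 0 < β) (hJ : 0 < J)
    (hσ : σ ∈ Set.Ioo (1 / 2 : ℝ) 1) (F : ℝ)
    (hF : Tendsto (fun k => dysonF h β J σ k) atTop (nhds F)) :
    F ≥ Real.log 2 +
        (1 / 2) * Real.log (Real.cosh (β * h + β * J * m1 * (Cconst (2 * σ - 1) - Cconst (2 * σ)))) +
        (1 / 2) * Real.log (Real.cosh (β * h + β * J * m2 * (Cconst (2 * σ - 1) - Cconst (2 * σ)))) -
        β * J / 2 * (Cconst (2 * σ - 1) - Cconst (2 * σ)) * ((m1 ^ 2 + m2 ^ 2) / 2) := by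
  set C : ℝ := Cconst (2 * σ - 1) - Cconst (2 * σ) with hC
  set x1 : ℝ := β * h + β * J * m1 * C with hx1
  set x2 : ℝ := β * h + β * J * m2 * C with hx2
  set t1 : ℝ := Real.tanh x1 with ht1
  set t2 : ℝ := Real.tanh x2 with ht2
  -- limit of the lower bounds
  have hCk := DHM.Ck_tendsto σ hσ
  have herr := DHM.err_tendsto β J σ hσ
  have hPhi : Tendsto (fun k : ℕ =>
      (1/2) * ((β*J/2) * DHM.Ck σ k * (t1^2 + t2^2)
        + β*h*(t1 + t2)
        + (Real.log (2*Real.cosh x1) - x1 * t1)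
        + (Real.log (2*Real.cosh x2) - x2 * t2))
      - β*J*((2:ℝ)^(2*σ*((k:ℝ)+1)))⁻¹ * 2^(k+1)) atTop (nhds (
      (1/2) * ((β*J/2) * C * (t1^2 + t2^2)
        + β*h*(t1 + t2)
        + (Real.log (2*Real.cosh x1) - x1 * t1)
        + (Real.log (2*Real.cosh x2) - x2 * t2)) - 0)) := by
    apply Tendsto.sub _ herr
    apply Tendsto.const_mul
    apply Tendsto.add (Tendsto.add (Tendsto.add _ tendsto_const_nhds) tendsto_const_nhds)
      tendsto_const_nhds
    exact (hCk.const_mul _).mul_const _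
  have hle : F ≥ (1/2) * ((β*J/2) * C * (t1^2 + t2^2)
        + β*h*(t1 + t2)
        + (Real.log (2*Real.cosh x1) - x1 * t1)
        + (Real.log (2*Real.cosh x2) - x2 * t2)) - 0 := by
    refine le_of_tendsto_of_tendsto' hPhi (hF.comp (tendsto_add_atTop_nat 1)) ?_
    intro k
    exact DHM.key β J σ h x1 x2 hβ hJ k
  -- algebraic comparison with the target
  have hCnn : 0 ≤ C := by
    refine ge_of_tendsto' hCk fun k => DHM.Ck_nonneg σ k
  have hL1 : Real.log (2 * Real.cosh x1) = Real.log 2 + Real.log (Real.cosh x1) :=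
    Real.log_mul (by norm_num) (ne_of_gt (Real.cosh_pos _))
  have hL2 : Real.log (2 * Real.cosh x2) = Real.log 2 + Real.log (Real.cosh x2) :=
    Real.log_mul (by norm_num) (ne_of_gt (Real.cosh_pos _))
  rw [hL1, hL2] at hle
  have hβJC : 0 ≤ β * J * C := mul_nonneg (mul_nonneg hβ.le hJ.le) hCnn
  have hs1 : 0 ≤ β * J * C * (t1 - m1)^2 := mul_nonneg hβJC (sq_nonneg _)
  have hs2 : 0 ≤ β * J * C * (t2 - m2)^2 := mul_nonneg hβJC (sq_nonneg _)
  have hx1t : x1 * t1 = β*h*t1 + β*J*m1*C*t1 := by rw [hx1]; ring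
  have hx2t : x2 * t2 = β*h*t2 + β*J*m2*C*t2 := by rw [hx2]; ring
  rw [hx1t, hx2t] at hle
  have he1 : β*J*C*(t1-m1)^2 = β*J*C*t1^2 - 2*β*J*C*m1*t1 + β*J*C*m1^2 := by ring
  have he2 : β*J*C*(t2-m2)^2 = β*J*C*t2^2 - 2*β*J*C*m2*t2 + β*J*C*m2^2 := by ring
  have hs1' : 0 ≤ β*J*C*t1^2 - 2*β*J*C*m1*t1 + β*J*C*m1^2 := by rw [← he1]; exact hs1
  have hs2' : 0 ≤ β*J*C*t2^2 - 2*β*J*C*m2*t2 + β*J*C*m2^2 := by rw [← he2]; exact hs2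
  clear_value C x1 x2 t1 t2
  linarith only [hle, hs1', hs2']
end
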